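/- Fix an interval [θ*, θ̄] partitioned into n equal segments with endpoints θ_i = θ̄ − i(θ̄ − θ*)/n, allocations x_i (i = 1..n) and prices defined recursively by u(x_i, θ_i) − p_i = δ·[u(x_{i+1}, θ_i) − p_{i+1}] with p_n fixed. Then the seller's revenue Σ_{i=1}^n δ^{i−1}(F(θ_{i−1}) − F(θ_i))·p_i equals ∫ δ^{t(θ)}·[v(x^a(x_n(θ),θ)) + x^a(x_n(θ),θ)·(θ − (1−F(θ))/f(θ))]·f(θ) dθ, where x_n(θ) = x_i and t(θ) = i−1 for θ ∈ [θ_i, θ_{i−1}], provided p_n equals type θ_n's full surplus minus its information rent (i.e., the boundary IR binds and local downward IC binds at each cutoff). -/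

import Mathlib

open Set MeasureTheory intervalIntegral Filter Topology

lemma DRI.envelope_integral
    (xbar : ℝ) (v : ℝ → ℝ)
    (hconc : StrictConcaveOn ℝ (Set.Icc 0 xbar) v)
    (xe : ℝ → ℝ)
    (hxe_mem : ∀ θ, xe θ ∈ Set.Icc 0 xbar)
    (hxe_max : ∀ θ, ∀ x' ∈ Set.Icc 0 xbar, v x' + θ * x' ≤ v (xe θ) + θ * xe θ)
    (c : ℝ) (hc : c ∈ Set.Icc 0 xbar)
    (g U : ℝ → ℝ)
    (hgdef : ∀ θ, g θ = min c (xe θ))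
    (hUdef : ∀ θ, U θ = v (g θ) + θ * g θ)
    (K K' : ℝ → ℝ) (hK : ∀ t, HasDerivAt K (K' t) t) (hK' : Continuous K')
    (a b : ℝ) (hab : a ≤ b) :
    IntervalIntegrable (fun θ => g θ * K θ + U θ * K' θ) volume a b ∧
    ∫ θ in a..b, (g θ * K θ + U θ * K' θ) = U b * K b - U a * K a := by
  have hxbar0 : (0:ℝ) ≤ xbar := le_trans hc.1 hc.2
  have hg_mem : ∀ θ, g θ ∈ Icc 0 c := by
    intro θ
    rw [hgdef]
    exact ⟨le_min hc.1 (hxe_mem θ).1, min_le_left _ _⟩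
  have hgx : ∀ θ, g θ ∈ Icc 0 xbar := fun θ => ⟨(hg_mem θ).1, le_trans (hg_mem θ).2 hc.2⟩
  -- maximality of g θ on [0, c]
  have hmax : ∀ θ, ∀ y ∈ Icc 0 c, v y + θ * y ≤ v (g θ) + θ * g θ := by
    intro θ y hy
    have hyx : y ∈ Icc 0 xbar := ⟨hy.1, le_trans hy.2 hc.2⟩
    rcases le_or_gt (xe θ) c with h | h
    · rw [hgdef θ, min_eq_right h]
      exact hxe_max θ y hyx
    · rw [hgdef θ, min_eq_left h.le]
      rcases eq_or_lt_of_le hy.2 with hyc | hyc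
      · subst hyc; exact le_refl _
      · have hylt : y < xe θ := lt_trans hyc h
        have hd : 0 < xe θ - y := by linarith
        have hne : xe θ - y ≠ 0 := ne_of_gt hd
        set t : ℝ := (xe θ - c) / (xe θ - y) with htdef
        have ht0 : 0 ≤ t := div_nonneg (by linarith) hd.le
        have ht1 : 0 ≤ 1 - t := by
          have : t ≤ 1 := (div_le_one hd).2 (by linarith)
          linarith
        have hcomb : t * y + (1 - t) * xe θ = c := by
          rw [htdef]; field_simp; ring
        have hvc : t * v y + (1 - t) * v (xe θ) ≤ v c := by
          have h2 := hconc.concaveOn.2 hyx (hxe_mem θ) ht0 ht1 (by ring)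
          simpa [smul_eq_mul, hcomb] using h2
        have hxey : v y + θ * y ≤ v (xe θ) + θ * xe θ := hxe_max θ y hyx
        have hpos : 0 ≤ (1 - t) * ((v (xe θ) + θ * xe θ) - (v y + θ * y)) :=
          mul_nonneg ht1 (by linarith)
        have hθc : θ * c = t * (θ * y) + (1 - t) * (θ * xe θ) := by
          rw [← hcomb]; ring
        nlinarith [hvc, hpos, hθc]
  have hkey : ∀ s t : ℝ, U s + (t - s) * g s ≤ U t := by
    intro s t
    have h := hmax t (g s) (hg_mem s)
    rw [hUdef s, hUdef t]
    nlinarith [h]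
  -- monotonicity of g
  have hxe_mono : Monotone xe := by
    intro s t hst
    rcases eq_or_lt_of_le hst with rfl | hst'
    · exact le_refl _
    by_contra hlt
    push_neg at hlt
    have h1 := hxe_max s (xe t) (hxe_mem t)
    have h2 := hxe_max t (xe s) (hxe_mem s)
    nlinarith [mul_pos (sub_pos.2 hst') (sub_pos.2 hlt)]
  have hg_mono : Monotone g := by
    intro s t hst
    rw [hgdef s, hgdef t]
    exact min_le_min le_rfl (hxe_mono hst)
  -- U is Lipschitz, hence continuous
  have habs : ∀ s t : ℝ, s ≤ t → |U t - U s| ≤ xbar * (t - s) := by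
    intro s t hst
    have h1 := hkey s t
    have h2 := hkey t s
    have hgs := hgx s; have hgt := hgx t
    rw [abs_le]
    constructor <;> nlinarith [hgs.1, hgs.2, hgt.1, hgt.2]
  have hUcont : Continuous U := by
    apply (LipschitzWith.of_dist_le_mul (K := Real.toNNReal xbar) (f := U) ?_).continuous
    intro s t
    rw [Real.dist_eq, Real.dist_eq, Real.coe_toNNReal _ hxbar0]
    rcases le_total s t with h | h
    · calc |U s - U t| = |U t - U s| := abs_sub_comm _ _
        _ ≤ xbar * (t - s) := habs s t h
        _ = xbar * |s - t| := by rw [abs_sub_comm, abs_of_nonneg (by linarith : (0:ℝ) ≤ t - s)]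
    · calc |U s - U t| ≤ xbar * (s - t) := habs t s h
        _ = xbar * |s - t| := by rw [abs_of_nonneg (by linarith : (0:ℝ) ≤ s - t)]
  -- slopes are monotone on Ioi s
  have hSmono : ∀ s : ℝ, MonotoneOn (fun t => (U t - U s) / (t - s)) (Ioi s) := by
    intro s t1 ht1 t2 ht2 h12
    rcases eq_or_lt_of_le h12 with rfl | h12'
    · exact le_refl _
    have hd1 : (0:ℝ) < t1 - s := sub_pos.2 ht1
    have hd2 : (0:ℝ) < t2 - s := sub_pos.2 ht2
    rw [div_le_div_iff₀ hd1 hd2]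
    have hA : U t1 - U s ≤ (t1 - s) * g t1 := by linarith [hkey t1 s]
    have hB : (t2 - t1) * g t1 ≤ U t2 - U t1 := by linarith [hkey t1 t2]
    have e1 : (U t1 - U s) * (t2 - t1) ≤ (t1 - s) * g t1 * (t2 - t1) :=
      mul_le_mul_of_nonneg_right hA (by linarith)
    have e2 : (t2 - t1) * g t1 * (t1 - s) ≤ (U t2 - U t1) * (t1 - s) :=
      mul_le_mul_of_nonneg_right hB (by linarith)
    nlinarith [e1, e2]
  set rU : ℝ → ℝ := fun s => sInf ((fun t => (U t - U s) / (t - s)) '' Ioi s) with hrUdef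
  have hlow : ∀ s : ℝ, ∀ y ∈ (fun t => (U t - U s) / (t - s)) '' Ioi s, g s ≤ y := by
    intro s y hy
    obtain ⟨t, ht, rfl⟩ := hy
    have hd : (0:ℝ) < t - s := sub_pos.2 ht
    rw [le_div_iff₀ hd]
    nlinarith [hkey s t]
  have hbddB : ∀ s : ℝ, BddBelow ((fun t => (U t - U s) / (t - s)) '' Ioi s) :=
    fun s => ⟨g s, hlow s⟩
  have hnem : ∀ s : ℝ, ((fun t => (U t - U s) / (t - s)) '' Ioi s).Nonempty :=
    fun s => ⟨_, Set.mem_image_of_mem _ (by simp [mem_Ioi] : s + 1 ∈ Ioi s)⟩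
  have hglb : ∀ s, g s ≤ rU s := fun s => le_csInf (hnem s) (hlow s)
  have hub : ∀ s t : ℝ, s < t → rU s ≤ g t := by
    intro s t hst
    have h1 : rU s ≤ (U t - U s) / (t - s) := csInf_le (hbddB s) (Set.mem_image_of_mem _ hst)
    have h2 : (U t - U s) / (t - s) ≤ g t := by
      rw [div_le_iff₀ (sub_pos.2 hst)]
      nlinarith [hkey t s]
    linarith
  have hUderiv : ∀ s : ℝ, HasDerivWithinAt U (rU s) (Ioi s) s := by
    intro s
    rw [hasDerivWithinAt_iff_tendsto_slope' (by simp : s ∉ Ioi s)]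
    have hT : Tendsto (fun t => (U t - U s) / (t - s)) (𝓝[>] s) (𝓝 (rU s)) :=
      MonotoneOn.tendsto_nhdsGT (hSmono s) (hbddB s)
    have hsl : slope U s = fun t => (U t - U s) / (t - s) := by
      funext t; rw [slope_def_field]
    rw [hsl]
    exact hT
  have hcnt : {s : ℝ | rU s ≠ g s}.Countable := by
    apply Set.Countable.mono _ hg_mono.countable_not_continuousAt
    intro s hs
    simp only [Set.mem_setOf_eq] at hs ⊢
    intro hcont
    apply hs
    refine le_antisymm ?_ (hglb s)
    by_contra hgt
    push_neg at hgt
    have hev : ∀ᶠ t in 𝓝 s, g t < rU s := hcont.eventually_lt_const hgt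
    have hev' : ∀ᶠ t in 𝓝[>] s, g t < rU s := hev.filter_mono nhdsWithin_le_nhds
    obtain ⟨t, h1, h2⟩ := (hev'.and self_mem_nhdsWithin).exists
    exact absurd (hub s t h2) (not_le.2 h1)
  have hae : rU =ᵐ[volume] g := by
    rw [Filter.EventuallyEq, ae_iff]
    exact measure_mono_null (fun s hs => hs) (hcnt.measure_zero _)
  have hKcont : Continuous K :=
    continuous_iff_continuousAt.2 fun t => (hK t).differentiableAt.continuousAt
  -- integrability
  have hgint : IntervalIntegrable g volume a b := hg_mono.intervalIntegrable
  have hpsi'int : IntervalIntegrable (fun t => g t * K t + U t * K' t) volume a b :=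
    (hgint.mul_continuousOn hKcont.continuousOn).add ((hUcont.mul hK').intervalIntegrable a b)
  refine ⟨hpsi'int, ?_⟩
  have haepsi : (fun t => rU t * K t + U t * K' t) =ᵐ[volume] (fun t => g t * K t + U t * K' t) := by
    filter_upwards [hae] with t ht
    rw [ht]
  have hpsiint : IntervalIntegrable (fun t => rU t * K t + U t * K' t) volume a b := by
    rw [intervalIntegrable_iff] at hpsi'int ⊢
    exact hpsi'int.congr (ae_restrict_of_ae haepsi.symm)
  have hHderiv : ∀ t ∈ Ioo a b,
      HasDerivWithinAt (fun y => U y * K y) (rU t * K t + U t * K' t) (Ioi t) t :=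
    fun t _ => (hUderiv t).mul ((hK t).hasDerivWithinAt)
  have hftc := integral_eq_sub_of_hasDeriv_right_of_le hab
    ((hUcont.mul hKcont).continuousOn) hHderiv hpsiint
  have hcongr : ∫ t in a..b, (g t * K t + U t * K' t)
      = ∫ t in a..b, (rU t * K t + U t * K' t) :=
    intervalIntegral.integral_congr_ae (haepsi.symm.mono fun t ht _ => ht)
  rw [hcongr, hftc]; rfl

lemma DRI.abel1 (G w : ℕ → ℝ) (m : ℕ) :
    ∑ i ∈ Finset.Icc 1 (m + 1), (G i - G (i - 1)) * w i
      = G (m + 1) * w (m + 1) - G 0 * w 1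
        + ∑ i ∈ Finset.Icc 1 m, G i * (w i - w (i + 1)) := by
  induction m with
  | zero => simp; ring
  | succ k ih =>
      rw [Finset.sum_Icc_succ_top (by omega : 1 ≤ k + 1 + 1), ih,
        Finset.sum_Icc_succ_top (by omega : 1 ≤ k + 1)]
      simp only [Nat.add_sub_cancel]
      ring

lemma DRI.abel2 (c G : ℕ → ℝ) (m : ℕ) :
    ∑ i ∈ Finset.Icc 1 (m + 1), c i * G (i - 1)
      = c 1 * G 0 + ∑ i ∈ Finset.Icc 1 m, c (i + 1) * G i := by
  induction m with
  | zero => simp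
  | succ k ih =>
      rw [Finset.sum_Icc_succ_top (by omega : 1 ≤ k + 1 + 1), ih,
        Finset.sum_Icc_succ_top (by omega : 1 ≤ k + 1)]
      simp only [Nat.add_sub_cancel]
      ring

/-- discrete revenue = discounted virtual surplus: with cutoff
types `θ_i = θ̄ − i(θ̄ − θ*)/n` partitioning `[θ*, θ̄]`, allocations `x_i`,
prices defined recursively by the cutoff indifference conditions
`u(x_i, θ_i) − p_i = δ·(u(x_{i+1}, θ_i) − p_{i+1})` with the boundary IR
binding (`p_n = u(x_n, θ_n)`, the lowest type `θ_n = θ*` getting full surplus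
minus a zero information rent), the seller's revenue equals the expected
discounted virtual surplus. -/
theorem discrete_revenue_identity
    (xbar : ℝ) (hxbar : 0 < xbar)
    (v : ℝ → ℝ)
    (hconc : StrictConcaveOn ℝ (Set.Icc 0 xbar) v)
    (hv0 : v 0 = 0)
    (xe : ℝ → ℝ)
    (hxe_mem : ∀ θ, xe θ ∈ Set.Icc 0 xbar)
    (hxe_max : ∀ θ, ∀ x' ∈ Set.Icc 0 xbar, v x' + θ * x' ≤ v (xe θ) + θ * xe θ)
    (u : ℝ → ℝ → ℝ)
    (hu : ∀ x θ, u x θ = v (min x (xe θ)) + θ * min x (xe θ))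
    (θstar θbar : ℝ) (hθ : θstar < θbar)
    (F f : ℝ → ℝ) (m M : ℝ) (hm : 0 < m)
    (hf_cont : ContinuousOn f (Set.Icc θstar θbar))
    (hf_bdd : ∀ θ ∈ Set.Icc θstar θbar, m ≤ f θ ∧ f θ ≤ M)
    (hFθ : ∀ θ ∈ Set.Icc θstar θbar, F θ = ∫ z in θstar..θ, f z)
    (hF1 : F θbar = 1)
    (δ : ℝ) (hδ : δ ∈ Set.Ico (0 : ℝ) 1)
    (n : ℕ) (hn : 1 ≤ n)
    (θf : ℕ → ℝ)
    (hθf : ∀ i ≤ n, θf i = θbar - (i : ℝ) * (θbar - θstar) / n)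
    (x p : ℕ → ℝ)
    (hx_mem : ∀ i, 1 ≤ i → i ≤ n → x i ∈ Set.Icc 0 xbar)
    (hrec : ∀ i, 1 ≤ i → i < n →
      u (x i) (θf i) - p i = δ * (u (x (i + 1)) (θf i) - p (i + 1)))
    (hpn : p n = u (x n) (θf n))
    (xstep : ℝ → ℝ) (tstep : ℝ → ℕ)
    (hstep : ∀ i, 1 ≤ i → i ≤ n → ∀ θ ∈ Set.Ioc (θf i) (θf (i - 1)),
      xstep θ = x i ∧ tstep θ = i - 1) :
    ∑ i ∈ Finset.Icc 1 n, δ ^ (i - 1) * (F (θf (i - 1)) - F (θf i)) * p i =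
      ∫ θ in θstar..θbar,
        δ ^ (tstep θ) *
          (v (min (xstep θ) (xe θ)) +
            min (xstep θ) (xe θ) * (θ - (1 - F θ) / f θ)) * f θ := by
  have hn0 : (n:ℝ) ≠ 0 := Nat.cast_ne_zero.2 (by omega)
  have hnpos : (0:ℝ) < n := by positivity
  have hθθ : (0:ℝ) < θbar - θstar := by linarith
  set Φ : ℝ → ℝ := fun θ =>
    δ ^ (tstep θ) *
      (v (min (xstep θ) (xe θ)) +
        min (xstep θ) (xe θ) * (θ - (1 - F θ) / f θ)) * f θ with hΦ
  -- θf facts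
  have hθf0 : θf 0 = θbar := by rw [hθf 0 (by omega)]; simp
  have hθfn : θf n = θstar := by rw [hθf n le_rfl]; field_simp; ring
  have hθfmem : ∀ i, i ≤ n → θf i ∈ Set.Icc θstar θbar := by
    intro i hi
    rw [hθf i hi]
    have hin : (i:ℝ) ≤ n := by exact_mod_cast hi
    have h0i : (0:ℝ) ≤ i := by positivity
    constructor
    · have h1 : (i:ℝ) * (θbar - θstar) / n ≤ θbar - θstar := by
        rw [div_le_iff₀ hnpos]
        nlinarith
      linarith
    · have : (0:ℝ) ≤ (i:ℝ) * (θbar - θstar) / n := by positivity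
      linarith
  have hθstep : ∀ i, 1 ≤ i → i ≤ n → θf (i-1) - θf i = (θbar - θstar)/n := by
    intro i h1 h2
    rw [hθf i h2, hθf (i-1) (by omega)]
    have hc1 : ((i-1:ℕ):ℝ) = (i:ℝ) - 1 := by
      rw [Nat.cast_sub h1, Nat.cast_one]
    rw [hc1]
    ring
  have hθlt : ∀ i, 1 ≤ i → i ≤ n → θf i < θf (i-1) := by
    intro i h1 h2
    have h := hθstep i h1 h2
    have hpos : (0:ℝ) < (θbar - θstar)/n := by positivity
    linarith
  -- continuous extension of f
  set q : ℝ → ℝ := fun t => min θbar (max θstar t) with hq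
  have hqmem : ∀ t, q t ∈ Set.Icc θstar θbar :=
    fun t => ⟨le_min hθ.le (le_max_left _ _), min_le_left _ _⟩
  have hqid : ∀ t ∈ Set.Icc θstar θbar, q t = t := by
    intro t ht
    simp only [hq]
    rw [max_eq_right ht.1, min_eq_right ht.2]
  have hqcont : Continuous q := continuous_const.min (continuous_const.max continuous_id)
  set ftil : ℝ → ℝ := fun t => f (q t) with hftil
  have hftilc : Continuous ftil := hf_cont.comp_continuous hqcont hqmem
  have hftil_eq : ∀ t ∈ Set.Icc θstar θbar, ftil t = f t := by
    intro t ht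
    simp only [hftil]
    rw [hqid t ht]
  set Ftil : ℝ → ℝ := fun t => ∫ z in θstar..t, ftil z with hFtil
  have hFderiv : ∀ t, HasDerivAt Ftil (ftil t) t := by
    intro t
    exact intervalIntegral.integral_hasDerivAt_right (hftilc.intervalIntegrable _ _)
      ⟨Set.univ, Filter.univ_mem, hftilc.stronglyMeasurable.aestronglyMeasurable.restrict⟩
      hftilc.continuousAt
  have hFeq : ∀ t ∈ Set.Icc θstar θbar, F t = Ftil t := by
    intro t ht
    rw [hFθ t ht]
    apply intervalIntegral.integral_congr
    intro z hz
    rw [Set.uIcc_of_le ht.1] at hz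
    exact (hftil_eq z ⟨hz.1, hz.2.trans ht.2⟩).symm
  set K : ℝ → ℝ := fun t => 1 - Ftil t with hKdef
  set K' : ℝ → ℝ := fun t => -ftil t with hK'def
  have hK : ∀ t, HasDerivAt K (K' t) t := fun t => (hFderiv t).const_sub 1
  have hK'c : Continuous K' := hftilc.neg
  -- main per-interval computation
  have hmain : ∀ i, 1 ≤ i → i ≤ n →
      IntervalIntegrable Φ volume (θf i) (θf (i-1)) ∧
      ∫ θ in (θf i)..(θf (i-1)), Φ θ
        = (δ^(i-1) * u (x i) (θf i)) * (1 - F (θf i))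
          - (δ^(i-1) * u (x i) (θf (i-1))) * (1 - F (θf (i-1))) := by
    intro i h1 h2
    have hle : θf i ≤ θf (i-1) := (hθlt i h1 h2).le
    obtain ⟨hint, hval⟩ := DRI.envelope_integral xbar v hconc xe hxe_mem hxe_max
      (x i) (hx_mem i h1 h2)
      (fun θ => min (x i) (xe θ)) (fun θ => v (min (x i) (xe θ)) + θ * min (x i) (xe θ))
      (fun _ => rfl) (fun _ => rfl) K K' hK hK'c (θf i) (θf (i-1)) hle
    have hIoc : Set.Ioc (θf i) (θf (i-1)) ⊆ Set.Icc θstar θbar := by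
      intro θ hθ'
      exact ⟨le_trans (hθfmem i h2).1 hθ'.1.le, le_trans hθ'.2 (hθfmem (i-1) (by omega)).2⟩
    have hEq : Set.EqOn Φ
        (fun θ => δ^(i-1) * (-((min (x i) (xe θ)) * K θ
          + (v (min (x i) (xe θ)) + θ * min (x i) (xe θ)) * K' θ)))
        (Set.Ioc (θf i) (θf (i-1))) := by
      intro θ hθ'
      obtain ⟨hxs, hts⟩ := hstep i h1 h2 θ hθ'
      have hmem := hIoc hθ'
      have hfe : ftil θ = f θ := hftil_eq θ hmem
      have hFe : F θ = Ftil θ := hFeq θ hmem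
      have hfpos : 0 < f θ := lt_of_lt_of_le hm (hf_bdd θ hmem).1
      have hfne : f θ ≠ 0 := ne_of_gt hfpos
      simp only [hΦ, hxs, hts, hKdef, hK'def, hfe, hFe]
      have expand : (v (min (x i) (xe θ)) + (min (x i) (xe θ)) * (θ - (1 - Ftil θ) / f θ)) * f θ
          = (v (min (x i) (xe θ)) + θ * (min (x i) (xe θ))) * f θ
            - (min (x i) (xe θ)) * (1 - Ftil θ) := by
        field_simp
        ring
      rw [mul_assoc, expand]
      ring
    have hvint : IntervalIntegrable
        (fun θ => δ^(i-1) * (-((min (x i) (xe θ)) * K θ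
          + (v (min (x i) (xe θ)) + θ * min (x i) (xe θ)) * K' θ))) volume (θf i) (θf (i-1)) :=
      (hint.neg).const_mul _
    constructor
    · rw [intervalIntegrable_iff_integrableOn_Ioc_of_le hle] at hvint ⊢
      exact hvint.congr_fun (fun θ hθ' => (hEq hθ').symm) measurableSet_Ioc
    · have hii : ∫ θ in (θf i)..(θf (i-1)), Φ θ
          = ∫ θ in (θf i)..(θf (i-1)),
              δ^(i-1) * (-((min (x i) (xe θ)) * K θ
                + (v (min (x i) (xe θ)) + θ * min (x i) (xe θ)) * K' θ)) := by
        rw [intervalIntegral.integral_of_le hle, intervalIntegral.integral_of_le hle]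
        exact setIntegral_congr_fun measurableSet_Ioc hEq
      rw [hii, intervalIntegral.integral_const_mul, intervalIntegral.integral_neg, hval]
      have hKi : K (θf i) = 1 - F (θf i) := by
        simp only [hKdef]
        rw [hFeq _ (hθfmem i h2)]
      have hKi1 : K (θf (i-1)) = 1 - F (θf (i-1)) := by
        simp only [hKdef]
        rw [hFeq _ (hθfmem (i-1) (by omega))]
      rw [hKi, hKi1, ← hu (x i) (θf i), ← hu (x i) (θf (i-1))]
      ring
  -- split the integral
  have hsplit : ∫ θ in θstar..θbar, Φ θ
      = ∑ i ∈ Finset.Icc 1 n, ∫ θ in (θf i)..(θf (i-1)), Φ θ := by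
    have hadj : ∀ k < n, IntervalIntegrable Φ volume (θf (n-k)) (θf (n-(k+1))) := by
      intro k hk
      have he : n - (k+1) = (n-k) - 1 := by omega
      rw [he]
      exact (hmain (n-k) (by omega) (by omega)).1
    have hS := intervalIntegral.sum_integral_adjacent_intervals (a := fun k => θf (n - k)) hadj
    simp only [Nat.sub_zero, Nat.sub_self] at hS
    rw [hθfn, hθf0] at hS
    rw [← hS]
    refine Finset.sum_nbij' (i := fun (k:ℕ) => n - k) (j := fun (i:ℕ) => n - i)
      ?_ ?_ ?_ ?_ ?_
    · intro a ha
      simp only [Finset.mem_range] at ha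
      simp only [Finset.mem_Icc]
      omega
    · intro a ha
      simp only [Finset.mem_Icc] at ha
      simp only [Finset.mem_range]
      omega
    · intro a ha
      simp only [Finset.mem_range] at ha
      omega
    · intro a ha
      simp only [Finset.mem_Icc] at ha
      omega
    · intro a ha
      simp only [Finset.mem_range] at ha
      have he : n - (a+1) = (n-a) - 1 := by omega
      rw [he]
  -- final assembly
  obtain ⟨mm, rfl⟩ : ∃ mm, n = mm + 1 := ⟨n-1, by omega⟩
  rw [hsplit]
  have hRHS : ∑ i ∈ Finset.Icc 1 (mm+1), ∫ θ in (θf i)..(θf (i-1)), Φ θ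
      = ∑ i ∈ Finset.Icc 1 (mm+1),
          ((δ^(i-1) * u (x i) (θf i)) * (1 - F (θf i))
            - (δ^(i-1) * u (x i) (θf (i-1))) * (1 - F (θf (i-1)))) := by
    refine Finset.sum_congr rfl ?_
    intro i hi
    simp only [Finset.mem_Icc] at hi
    exact (hmain i hi.1 hi.2).2
  rw [hRHS]
  have hLHS : ∑ i ∈ Finset.Icc 1 (mm+1), δ ^ (i - 1) * (F (θf (i - 1)) - F (θf i)) * p i
      = ∑ i ∈ Finset.Icc 1 (mm+1),
          ((1 - F (θf i)) - (1 - F (θf (i-1)))) * (δ^(i-1) * p i) := by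
    refine Finset.sum_congr rfl ?_
    intro i _
    ring
  rw [hLHS]
  have h1 := DRI.abel1 (fun j => 1 - F (θf j)) (fun i => δ^(i-1) * p i) mm
  rw [h1]
  have hsplit2 : ∑ i ∈ Finset.Icc 1 (mm+1),
      ((δ^(i-1) * u (x i) (θf i)) * (1 - F (θf i))
        - (δ^(i-1) * u (x i) (θf (i-1))) * (1 - F (θf (i-1))))
      = ∑ i ∈ Finset.Icc 1 (mm+1), (δ^(i-1) * u (x i) (θf i)) * (1 - F (θf i))
        - ∑ i ∈ Finset.Icc 1 (mm+1), (δ^(i-1) * u (x i) (θf (i-1))) * (1 - F (θf (i-1))) :=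
    Finset.sum_sub_distrib _ _
  rw [hsplit2]
  have h2 := DRI.abel2 (fun i => δ^(i-1) * u (x i) (θf (i-1))) (fun j => 1 - F (θf j)) mm
  rw [h2]
  rw [Finset.sum_Icc_succ_top (by omega : 1 ≤ mm + 1)
    (f := fun i => (δ^(i-1) * u (x i) (θf i)) * (1 - F (θf i)))]
  have hG0 : 1 - F (θf 0) = 0 := by rw [hθf0, hF1]; ring
  have hwn : δ^(mm+1-1) * p (mm+1) = δ^(mm+1-1) * u (x (mm+1)) (θf (mm+1)) := by
    rw [hpn]
  have hterm : ∀ i ∈ Finset.Icc 1 mm,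
      (1 - F (θf i)) * (δ^(i-1) * p i - δ^(i+1-1) * p (i+1))
        = (δ^(i-1) * u (x i) (θf i)) * (1 - F (θf i))
          - (δ^(i+1-1) * u (x (i+1)) (θf (i+1-1))) * (1 - F (θf i)) := by
    intro i hi
    simp only [Finset.mem_Icc] at hi
    have hr := hrec i hi.1 (by omega)
    have hpow : δ^(i-1) * δ = δ^i := by
      rw [← pow_succ]
      congr 1
      omega
    simp only [Nat.add_sub_cancel]
    have e3 : δ^(i-1) * (δ * u (x (i+1)) (θf i)) = δ^i * u (x (i+1)) (θf i) := by
      rw [← mul_assoc, hpow]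
    have e4 : δ^(i-1) * (δ * p (i+1)) = δ^i * p (i+1) := by
      rw [← mul_assoc, hpow]
    have h5 : δ^(i-1) * (u (x i) (θf i) - p i)
        = δ^(i-1) * (δ * (u (x (i+1)) (θf i) - p (i+1))) := by rw [hr]
    have hkey : δ^(i-1) * p i - δ^i * p (i+1)
        = δ^(i-1) * u (x i) (θf i) - δ^i * u (x (i+1)) (θf i) := by
      nlinarith [h5, e3, e4]
    rw [hkey]
    ring
  rw [Finset.sum_congr rfl hterm]
  rw [hG0, hwn]
  rw [Finset.sum_sub_distrib]
  ring
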